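/- Lower bound for arbitrary approximation spaces (optimality of spectral spaces, one direction; cf. Theorem 3.3 of Babuška–Lipton as used in Section 5.2): With V, ⟨·,·⟩, A, eigenvalues 0 < λ₁ ≤ … ≤ λ_N, and orthonormal eigenbasis ψ₁,…,ψ_N as in the context, for every 1 ≤ L < N and every linear subspace W ⊆ V with dim W = L, there exists u ∈ V with u ≠ 0 such that for every w ∈ W, λ_{L+1} ‖u − w‖² ≥ ⟨A u, u⟩. -/

import Mathlib

open RealInnerProductSpace

/-- Lower bound for arbitrary approximation spaces (optimality of spectral spaces,
one direction; cf. Theorem 3.3 of Babuška–Lipton). -/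
theorem stmt_6
    {V : Type*} [NormedAddCommGroup V] [InnerProductSpace ℝ V] [FiniteDimensional ℝ V]
    (N : ℕ) (hdim : Module.finrank ℝ V = N)
    (A : V →ₗ[ℝ] V) (hA : A.IsSymmetric) (hApos : ∀ v : V, v ≠ 0 → 0 < ⟪A v, v⟫)
    (lam : Fin N → ℝ) (hlam0 : ∀ m, 0 < lam m) (hmono : Monotone lam)
    (ψ : Fin N → V) (hON : Orthonormal ℝ ψ)
    (heig : ∀ m, A (ψ m) = lam m • ψ m)
    (L : ℕ) (hL1 : 1 ≤ L) (hLN : L < N)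
    (W : Submodule ℝ V) (hW : Module.finrank ℝ W = L) :
    ∃ u : V, u ≠ 0 ∧ ∀ w ∈ W, ⟪A u, u⟫ ≤ lam ⟨L, hLN⟩ * ‖u - w‖ ^ 2 := by
  have hLN' : L + 1 ≤ N := hLN
  set φ : Fin (L + 1) → V := fun i => ψ (Fin.castLE hLN' i) with hφ
  have hONe : Orthonormal ℝ φ := hON.comp _ (Fin.castLE_injective hLN')
  set S : Submodule ℝ V := Submodule.span ℝ (Set.range φ) with hS
  have hSrank : Module.finrank ℝ S = L + 1 := by
    rw [finrank_span_eq_card hONe.linearIndependent, Fintype.card_fin]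
  let f : S →ₗ[ℝ] W := (Submodule.orthogonalProjection W).toLinearMap.comp S.subtype
  have hfnotinj : ¬ Function.Injective f := by
    intro h
    have := LinearMap.finrank_le_finrank_of_injective h
    rw [hSrank, hW] at this
    omega
  rw [Function.not_injective_iff] at hfnotinj
  obtain ⟨a, b, hab, hne⟩ := hfnotinj
  refine ⟨(a : V) - (b : V), ?_, ?_⟩
  · intro h
    exact hne (Subtype.ext (sub_eq_zero.mp h))
  set u : V := (a : V) - (b : V) with hu
  have huS : u ∈ S := sub_mem a.2 b.2
  have huW : u ∈ Wᗮ := by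
    rw [← Submodule.orthogonalProjection_eq_zero_iff]
    have : Submodule.orthogonalProjection W u =
        Submodule.orthogonalProjection W (a : V) - Submodule.orthogonalProjection W (b : V) := by
      simp [hu, map_sub]
    rw [this]
    have : Submodule.orthogonalProjection W (a : V) = Submodule.orthogonalProjection W (b : V) := hab
    rw [this, sub_self]
  obtain ⟨c, hc⟩ := (Finsupp.mem_span_range_iff_exists_finsupp.mp huS)
  have hcsum : u = ∑ i, c i • φ i := by
    rw [← hc, Finsupp.sum_fintype]
    simp
  -- compute ⟨Au, u⟩
  have hAu : A u = ∑ i, (lam (Fin.castLE hLN' i) * c i) • φ i := by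
    rw [hcsum, map_sum]
    refine Finset.sum_congr rfl fun i _ => ?_
    rw [map_smul, hφ, heig, smul_smul, mul_comm]
  have hinner : ⟪A u, u⟫ = ∑ i, lam (Fin.castLE hLN' i) * c i ^ 2 := by
    rw [hAu]
    nth_rewrite 1 [hcsum]
    rw [hONe.inner_sum]
    simp [mul_comm, mul_assoc, sq, mul_left_comm]
  have hnorm : ‖u‖ ^ 2 = ∑ i, c i ^ 2 := by
    rw [← real_inner_self_eq_norm_sq]
    nth_rewrite 1 [hcsum]
    nth_rewrite 1 [hcsum]
    rw [hONe.inner_sum]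
    simp [sq]
  have hbound : ⟪A u, u⟫ ≤ lam ⟨L, hLN⟩ * ‖u‖ ^ 2 := by
    rw [hinner, hnorm, Finset.mul_sum]
    refine Finset.sum_le_sum fun i _ => ?_
    have : lam (Fin.castLE hLN' i) ≤ lam ⟨L, hLN⟩ := by
      apply hmono
      exact Fin.mk_le_mk.mpr (Nat.lt_succ_iff.mp i.2)
    exact mul_le_mul_of_nonneg_right this (sq_nonneg _)
  clear_value u
  intro w hw
  have hperp : ⟪u, w⟫ = 0 := real_inner_comm u w ▸ huW w hw
  have hle : ‖u‖ ^ 2 ≤ ‖u - w‖ ^ 2 := by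
    rw [norm_sub_sq_real, hperp]
    nlinarith [sq_nonneg ‖w‖]
  calc ⟪A u, u⟫ ≤ lam ⟨L, hLN⟩ * ‖u‖ ^ 2 := hbound
    _ ≤ lam ⟨L, hLN⟩ * ‖u - w‖ ^ 2 :=
        mul_le_mul_of_nonneg_left hle (hlam0 _).le
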